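/- Let A be a Banach algebra and A# its unitization. If A is non-unital and there exists a non-inner continuous derivation D : A → A*, then the map D₁ : A# → A* defined by D₁(a + α·1) = D(a) is a non-inner continuous derivation, and hence A# is not ideally amenable. -/

import Mathlib

open NormedSpace

noncomputable section

variable {A : Type*} [NonUnitalNormedRing A] [NormedSpace ℂ A]
  [IsScalarTower ℂ A A] [SMulCommClass ℂ A A]

/-- A closed two-sided ideal of a Banach algebra, given as a closed submodule
stable under left and right multiplication. -/
structure IsClosedTwoSidedIdeal (I : Submodule ℂ A) : Prop where
  isClosed : IsClosed (I : Set A)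
  mul_left : ∀ (a : A) ⦃x : A⦄, x ∈ I → a * x ∈ I
  mul_right : ∀ (a : A) ⦃x : A⦄, x ∈ I → x * a ∈ I

/-- `D : A → I*` is a derivation for the canonical dual bimodule structure:
`⟨a·f, i⟩ = ⟨f, i a⟩` and `⟨f·a, i⟩ = ⟨f, a i⟩`, so that
`D(ab) = a·D(b) + D(a)·b` reads pointwise as below. -/
def IsIdealDerivation (I : Submodule ℂ A) (hI : IsClosedTwoSidedIdeal I)
    (D : A →L[ℂ] StrongDual ℂ I) : Prop :=
  ∀ a b : A, ∀ i : I, D (a * b) i =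
    D b ⟨(i : A) * a, hI.mul_right a i.2⟩ + D a ⟨b * (i : A), hI.mul_left b i.2⟩

/-- `D : A → I*` is inner: `D = δ_ξ`, i.e. `D a = a·ξ - ξ·a`. -/
def IsInnerIdealDerivation (I : Submodule ℂ A) (hI : IsClosedTwoSidedIdeal I)
    (D : A →L[ℂ] StrongDual ℂ I) : Prop :=
  ∃ ξ : StrongDual ℂ I, ∀ (a : A) (i : I),
    D a i = ξ ⟨(i : A) * a, hI.mul_right a i.2⟩ - ξ ⟨a * (i : A), hI.mul_left a i.2⟩

/-- `A` is ideally amenable: for every closed two-sided ideal `I`,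
every continuous derivation `A → I*` is inner. -/
def IdeallyAmenable (A : Type*) [NonUnitalNormedRing A] [NormedSpace ℂ A]
    [IsScalarTower ℂ A A] [SMulCommClass ℂ A A] : Prop :=
  ∀ (I : Submodule ℂ A) (hI : IsClosedTwoSidedIdeal I) (D : A →L[ℂ] StrongDual ℂ I),
    IsIdealDerivation I hI D → IsInnerIdealDerivation I hI D

/-- If `A` is a non-unital Banach algebra and `D : A → A*` is a
non-inner continuous derivation, then `D₁ : A# → A*`, `D₁(a + α·1) = D(a)`, is a
non-inner continuous derivation on the unitization, and hence `A#` is not ideally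
amenable.  The `A#`-bimodule actions on `A*` are the natural extensions of the
`A`-actions: `⟨u·f, x⟩ = ⟨f, x·u⟩` with `x·u = x * u.snd + u.fst • x`, etc. -/
theorem unitization_not_ideally_amenable_of_nonWeaklyAmenable
    [CompleteSpace A] [RegularNormedAlgebra ℂ A]
    (hnonunital : ¬ ∃ e : A, ∀ a : A, e * a = a ∧ a * e = a)
    (D : A →L[ℂ] StrongDual ℂ A)
    (hD : ∀ a b x : A, D (a * b) x = D b (x * a) + D a (b * x))
    (hDnotinner : ¬ ∃ ξ : StrongDual ℂ A, ∀ a x : A, D a x = ξ (x * a) - ξ (a * x)) :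
    (Continuous fun u : Unitization ℂ A => D (u.snd)) ∧
    (∀ u v : Unitization ℂ A, ∀ x : A,
      D ((u * v).snd) x =
        D (v.snd) (x * u.snd + u.fst • x) +
          D (u.snd) (v.snd * x + v.fst • x)) ∧
    (¬ ∃ ξ : StrongDual ℂ A, ∀ (u : Unitization ℂ A) (x : A),
      D (u.snd) x =
        ξ (x * u.snd + u.fst • x) -
          ξ (u.snd * x + u.fst • x)) ∧
    ¬ IdeallyAmenable (Unitization ℂ A) := by
  have hsndc : Continuous (fun u : Unitization ℂ A => u.snd) :=
    continuous_snd.comp (Unitization.uniformEquivProd (𝕜 := ℂ) (A := A)).continuous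
  have hfstc : Continuous (fun u : Unitization ℂ A => u.fst) :=
    continuous_fst.comp (Unitization.uniformEquivProd (𝕜 := ℂ) (A := A)).continuous
  -- snd as a continuous linear map
  let sndCLM : Unitization ℂ A →L[ℂ] A :=
    { toLinearMap := Unitization.sndHom ℂ ℂ A, cont := hsndc }
  have hcont : Continuous fun u : Unitization ℂ A => D (u.snd) :=
    D.continuous.comp hsndc
  have hder : ∀ u v : Unitization ℂ A, ∀ x : A,
      D ((u * v).snd) x =
        D (v.snd) (x * u.snd + u.fst • x) +
          D (u.snd) (v.snd * x + v.fst • x) := by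
    intro u v x
    rw [Unitization.snd_mul]
    simp only [map_add, map_smul, ContinuousLinearMap.add_apply,
      ContinuousLinearMap.coe_smul', Pi.smul_apply, hD, smul_eq_mul]
    ring
  refine ⟨hcont, hder, ?_, ?_⟩
  · rintro ⟨ξ, hξ⟩
    apply hDnotinner
    refine ⟨ξ, fun a x => ?_⟩
    have := hξ (Unitization.inr a) x
    simpa using this
  · intro h
    -- the ideal A inside the unitization
    set I : Submodule ℂ (Unitization ℂ A) :=
      { carrier := {u | u.fst = 0}
        add_mem' := by intro a b ha hb; simp_all [Unitization.fst_add]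
        zero_mem' := by simp
        smul_mem' := by intro c u hu; simp_all [Unitization.fst_smul] } with hI_def
    have memI : ∀ u : Unitization ℂ A, u ∈ I ↔ u.fst = 0 := fun u => Iff.rfl
    have hI : IsClosedTwoSidedIdeal I := by
      refine ⟨?_, ?_, ?_⟩
      · exact isClosed_eq hfstc continuous_const
      · intro a x hx
        simp only [memI, Unitization.fst_mul] at hx ⊢
        rw [hx, mul_zero]
      · intro a x hx
        simp only [memI, Unitization.fst_mul] at hx ⊢
        rw [hx, zero_mul]
    -- D' : A# → I*
    let j : I →L[ℂ] A := sndCLM.comp I.subtypeL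
    let D' : Unitization ℂ A →L[ℂ] StrongDual ℂ I :=
      ((ContinuousLinearMap.compL ℂ I A ℂ).flip j).comp (D.comp sndCLM)
    have hD'apply : ∀ (u : Unitization ℂ A) (i : I),
        D' u i = D (u.snd) ((i : Unitization ℂ A).snd) := fun u i => rfl
    have hD'der : IsIdealDerivation I hI D' := by
      intro u v i
      have hi : (i : Unitization ℂ A).fst = 0 := i.2
      simp only [hD'apply, Unitization.snd_mul, hi, zero_smul, add_zero, zero_add]
      have := hder u v ((i : Unitization ℂ A).snd)
      rw [Unitization.snd_mul] at this
      rw [this]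
      congr 1 <;> [skip; congr 1] <;> abel
    obtain ⟨ξ, hξ⟩ := h I hI D' hD'der
    apply hDnotinner
    -- restrict ξ to A via inr
    have hinr_mem : ∀ a : A, (Unitization.inr a : Unitization ℂ A) ∈ I := fun a => rfl
    let inrCLM : A →L[ℂ] Unitization ℂ A :=
      { toLinearMap := Unitization.inrHom ℂ ℂ A, cont := Unitization.isometry_inr.continuous }
    let inrI : A →L[ℂ] I := inrCLM.codRestrict I hinr_mem
    refine ⟨ξ.comp inrI, fun a x => ?_⟩
    have := hξ (Unitization.inr a) (inrI x)
    have h1 : ((inrI x : Unitization ℂ A) * Unitization.inr a : Unitization ℂ A)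
        = Unitization.inr (x * a) := by
      rw [show ((inrI x : I) : Unitization ℂ A) = Unitization.inr x from rfl]
      ext <;> simp [Unitization.fst_mul, Unitization.snd_mul, inrI, inrCLM]
    have h2 : ((Unitization.inr a : Unitization ℂ A) * (inrI x : Unitization ℂ A))
        = Unitization.inr (a * x) := by
      rw [show ((inrI x : I) : Unitization ℂ A) = Unitization.inr x from rfl]
      ext <;> simp [Unitization.fst_mul, Unitization.snd_mul, inrI, inrCLM]
    simp only [hD'apply] at this
    rw [show ((Unitization.inr a : Unitization ℂ A).snd) = a from rfl] at this
    rw [show (((inrI x : I) : Unitization ℂ A).snd) = x from rfl] at this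
    rw [this]
    congr 1
    · exact congrArg ξ (Subtype.ext h1)
    · exact congrArg ξ (Subtype.ext h2)
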